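/- For the p-typical Witt vectors of length 1 (i.e., the classical W_2), the ring W_1(ℤ) is isomorphic to ℤ[x]/(x² - p·x), with x corresponding to the Verschiebung element V_p(1). -/

import Mathlib

open Polynomial WittVector

section Aux

variable (p : ℕ) [Fact p.Prime]

lemma wittaux_ghost0 (w : WittVector p ℤ) : ghostComponent 0 w = w.coeff 0 := by
  simp [ghostComponent_apply, wittPolynomial_zero]

lemma wittaux_ghost1 (w : WittVector p ℤ) :
    ghostComponent 1 w = (p : ℤ) * w.coeff 1 + w.coeff 0 ^ p := by
  simp [ghostComponent_apply, wittPolynomial_one]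

lemma wittaux_g0u (m n : ℤ) :
    ghostComponent 0 ((m : WittVector p ℤ) + (n : WittVector p ℤ) * verschiebung 1) = m := by
  simp [map_add, map_mul, map_intCast, ghostComponent_zero_verschiebung]

lemma wittaux_g1u (m n : ℤ) :
    ghostComponent 1 ((m : WittVector p ℤ) + (n : WittVector p ℤ) * verschiebung 1)
      = m + n * p := by
  have h : ghostComponent 1 (verschiebung (1 : WittVector p ℤ))
      = p * ghostComponent 0 (1 : WittVector p ℤ) :=
    ghostComponent_verschiebung _ 0
  simp only [map_add, map_mul, map_intCast, map_one, h, mul_one]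
  push_cast
  ring

lemma wittaux_coeff0 (m n : ℤ) :
    ((m : WittVector p ℤ) + (n : WittVector p ℤ) * verschiebung 1).coeff 0 = m := by
  rw [← wittaux_ghost0, wittaux_g0u]

lemma wittaux_coeff1 (m n : ℤ) :
    (p : ℤ) * ((m : WittVector p ℤ) + (n : WittVector p ℤ) * verschiebung 1).coeff 1
      = m + n * p - m ^ p := by
  have h := wittaux_ghost1 p ((m : WittVector p ℤ) + (n : WittVector p ℤ) * verschiebung 1)
  rw [wittaux_g1u, wittaux_coeff0] at h
  linarith

lemma wittaux_vsq :
    verschiebung (1 : WittVector p ℤ) * verschiebung 1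
      = (p : WittVector p ℤ) * verschiebung 1 := by
  have h1 : verschiebung ((1 : WittVector p ℤ) * frobenius (verschiebung 1))
      = verschiebung (1 : WittVector p ℤ) * verschiebung 1 :=
    verschiebung_mul_frobenius _ _
  rw [frobenius_verschiebung, one_mul, one_mul] at h1
  rw [← h1]
  have h2 : (p : WittVector p ℤ) = p • (1 : WittVector p ℤ) := by
    simp [nsmul_eq_mul]
  have h3 : verschiebung ((p : ℕ) • (1 : WittVector p ℤ))
      = (p : WittVector p ℤ) * verschiebung 1 := by
    rw [map_nsmul, nsmul_eq_mul]
  rw [← h3, ← h2]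

lemma wittaux_indep (m n : ℤ)
    (h : WittVector.truncate 2 ((m : WittVector p ℤ) + (n : WittVector p ℤ) * verschiebung 1)
      = 0) : m = 0 ∧ n = 0 := by
  have hp0 : (p : ℤ) ≠ 0 := by exact_mod_cast (Fact.out : p.Prime).ne_zero
  set u := (m : WittVector p ℤ) + (n : WittVector p ℤ) * verschiebung 1 with hu
  have h0 : u.coeff 0 = 0 := by
    have := congrArg (fun x => TruncatedWittVector.coeff (⟨0, by norm_num⟩ : Fin 2) x) h
    simpa [WittVector.coeff_truncate, TruncatedWittVector.coeff_zero] using this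
  have h1 : u.coeff 1 = 0 := by
    have := congrArg (fun x => TruncatedWittVector.coeff (⟨1, by norm_num⟩ : Fin 2) x) h
    simpa [WittVector.coeff_truncate, TruncatedWittVector.coeff_zero] using this
  have hm : m = 0 := by rw [← wittaux_coeff0 p m n, ← hu, h0]
  have hc1 := wittaux_coeff1 p m n
  rw [← hu, h1, hm, mul_zero] at hc1
  have hpp : (0 : ℤ) ^ p = 0 := by
    exact zero_pow (Fact.out : p.Prime).ne_zero
  rw [hpp] at hc1
  constructor
  · exact hm
  · have : n * p = 0 := by linarith
    rcases mul_eq_zero.mp this with h | h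
    · exact h
    · exact absurd h hp0

end Aux

/-- For the `p`-typical Witt vectors of length 1 (normalized indexing, i.e.
the classical `W_2`, formalized as `TruncatedWittVector p 2`), the ring `W_1(ℤ)` is isomorphic
to `ℤ[x]/(x² - p·x)`, with `x` corresponding to the Verschiebung element `V_p(1)`. -/
theorem witt_length_one_int_presentation (p : ℕ) [Fact p.Prime] :
    ∃ e : (Polynomial ℤ ⧸ Ideal.span
        {Polynomial.X ^ 2 - Polynomial.C (p : ℤ) * Polynomial.X}) ≃+*
        TruncatedWittVector p 2 ℤ,
      e (Ideal.Quotient.mk _ Polynomial.X) =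
        WittVector.truncate 2 (WittVector.verschiebung (1 : WittVector p ℤ)) := by
  have hp0 : (p : ℤ) ≠ 0 := by exact_mod_cast (Fact.out : p.Prime).ne_zero
  set v : WittVector p ℤ := verschiebung 1 with hv
  set tv : TruncatedWittVector p 2 ℤ := WittVector.truncate 2 v with htv
  set g : Polynomial ℤ := X ^ 2 - C (p : ℤ) * X with hg
  -- g is monic of degree 2
  have hdegC : (C (p : ℤ) * X).degree ≤ 1 := by
    refine le_trans (degree_mul_le _ _) ?_
    rw [degree_X]
    refine le_trans (add_le_add degree_C_le (le_refl 1)) ?_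
    norm_num
  have hgmonic : g.Monic := by
    rw [hg]
    exact monic_X_pow_sub (lt_of_le_of_lt hdegC (by norm_num))
  have hlt2 : (C (p : ℤ) * X).degree < (X ^ 2 : Polynomial ℤ).degree := by
    rw [degree_X_pow]
    exact lt_of_le_of_lt hdegC (by norm_num)
  have hgdeg : g.degree = 2 := by
    rw [hg, degree_sub_eq_left_of_degree_lt hlt2, degree_X_pow]
    norm_num
  -- the algebra map
  set φ : Polynomial ℤ →+* TruncatedWittVector p 2 ℤ := (aeval tv).toRingHom with hφ
  have hφapp : ∀ q, φ q = aeval tv q := fun q => rfl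
  -- image of integer-linear polynomials
  have himg : ∀ m n : ℤ, φ (C m + C n * X)
      = WittVector.truncate 2 ((m : WittVector p ℤ) + (n : WittVector p ℤ) * v) := by
    intro m n
    rw [hφapp]
    simp only [map_add, map_mul, aeval_C, aeval_X, eq_intCast, map_intCast, htv]
  -- φ kills g
  have hφg : φ g = 0 := by
    have hsq : tv * tv = ((p : ℤ) : TruncatedWittVector p 2 ℤ) * tv := by
      rw [htv, ← map_mul, hv, wittaux_vsq, map_mul, map_natCast]
      norm_num
    rw [hφapp, hg]
    simp only [map_sub, map_mul, map_pow, aeval_C, aeval_X, eq_intCast, map_intCast]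
    rw [sq, hsq, sub_self]
  have hker : ∀ a ∈ Ideal.span {g}, φ a = 0 := by
    intro a ha
    rw [Ideal.mem_span_singleton] at ha
    obtain ⟨b, rfl⟩ := ha
    rw [map_mul, hφg, zero_mul]
  set ψ := Ideal.Quotient.lift (Ideal.span {g}) φ hker with hψ
  -- injectivity
  have hinj : Function.Injective ψ := by
    rw [injective_iff_map_eq_zero]
    intro a ha
    obtain ⟨q, rfl⟩ := Ideal.Quotient.mk_surjective a
    rw [hψ, Ideal.Quotient.lift_mk] at ha
    rw [Ideal.Quotient.eq_zero_iff_mem, Ideal.mem_span_singleton]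
    have hqr : q %ₘ g + g * (q /ₘ g) = q := modByMonic_add_div q g
    have hφr : φ (q %ₘ g) = 0 := by
      have h := congrArg φ hqr
      rw [map_add, map_mul, hφg, zero_mul, add_zero] at h
      rw [h, ha]
    have hrdeg : (q %ₘ g).degree ≤ 1 := by
      have := degree_modByMonic_lt q hgmonic
      rw [hgdeg] at this
      exact Order.le_of_lt_succ (by exact_mod_cast this)
    have hrform : q %ₘ g = C ((q %ₘ g).coeff 0) + C ((q %ₘ g).coeff 1) * X := by
      have h := eq_X_add_C_of_degree_le_one hrdeg
      linear_combination h
    rw [hrform, himg] at hφr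
    obtain ⟨h0, h1⟩ := wittaux_indep p _ _ hφr
    have hr0 : q %ₘ g = 0 := by rw [hrform, h0, h1]; simp
    rw [← hqr, hr0, zero_add]
    exact Dvd.intro _ rfl
  -- surjectivity
  have hsurj : Function.Surjective ψ := by
    intro a
    obtain ⟨w, rfl⟩ := WittVector.truncate_surjective (p := p) 2 ℤ a
    set a0 := w.coeff 0 with ha0
    set a1 := w.coeff 1 with ha1
    have hdvd : (p : ℤ) ∣ a0 ^ p - a0 := by
      have hz : ((a0 ^ p - a0 : ℤ) : ZMod p) = 0 := by
        push_cast
        rw [ZMod.pow_card]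
        ring
      exact_mod_cast (ZMod.intCast_zmod_eq_zero_iff_dvd _ p).mp hz
    obtain ⟨c, hc⟩ := hdvd
    refine ⟨Ideal.Quotient.mk _ (C a0 + C (a1 + c) * X), ?_⟩
    rw [hψ, Ideal.Quotient.lift_mk, himg]
    set u := (a0 : WittVector p ℤ) + ((a1 + c : ℤ) : WittVector p ℤ) * v with hu
    have hu0 : u.coeff 0 = a0 := by rw [hu, hv]; exact wittaux_coeff0 p _ _
    have hu1 : u.coeff 1 = a1 := by
      have h := wittaux_coeff1 p a0 (a1 + c)
      rw [← hv, ← hu] at h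
      have : (p : ℤ) * u.coeff 1 = (p : ℤ) * a1 := by
        rw [h]; linear_combination -hc
      exact mul_left_cancel₀ hp0 this
    apply TruncatedWittVector.ext
    intro i
    fin_cases i
    · simp only [WittVector.coeff_truncate]
      exact hu0.trans ha0
    · simp only [WittVector.coeff_truncate]
      exact hu1.trans ha1
  refine ⟨RingEquiv.ofBijective ψ ⟨hinj, hsurj⟩, ?_⟩
  show ψ (Ideal.Quotient.mk _ X) = tv
  rw [hψ, Ideal.Quotient.lift_mk, hφapp, aeval_X]
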